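/- If t is a positive integer with t ≡ 15 (mod 18), then a₃(t) = (2t² − 32t + 102)/9. -/

import Mathlib

/-- A 3×3 magic square with magic sum `t`: pairwise distinct positive integer entries,
all row sums, column sums, and both main diagonal sums equal to `t`. -/
def IsMagicSquare3 (t : ℕ) (M : Matrix (Fin 3) (Fin 3) ℕ) : Prop :=
  (∀ i j, 0 < M i j) ∧
  (Function.Injective fun p : Fin 3 × Fin 3 => M p.1 p.2) ∧
  (∀ i, ∑ j, M i j = t) ∧
  (∀ j, ∑ i, M i j = t) ∧
  M 0 0 + M 1 1 + M 2 2 = t ∧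
  M 0 2 + M 1 1 + M 2 0 = t

/-- The number of 3×3 magic squares with magic sum `t`. -/
noncomputable def a3 (t : ℕ) : ℕ := Set.ncard {M : Matrix (Fin 3) (Fin 3) ℕ | IsMagicSquare3 t M}

namespace MA

def nn (m : ℕ) : ℤ := 6*m+4

def P (p : ℤ × ℤ) : Prop :=
  p.1 ≠ 0 ∧ p.2 ≠ 0 ∧ p.1 ≠ p.2 ∧ p.1 ≠ -p.2 ∧ p.1 ≠ 2*p.2 ∧ p.1 ≠ -(2*p.2) ∧
  p.2 ≠ 2*p.1 ∧ p.2 ≠ -(2*p.1)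

instance : DecidablePred P := fun p => by unfold P; infer_instance

noncomputable def T (m : ℕ) : Finset (ℤ × ℤ) :=
  ((Finset.Icc (-(nn m)) (nn m)) ×ˢ (Finset.Icc (-(nn m)) (nn m))).filter
    (fun p => -(nn m) ≤ p.1 + p.2 ∧ p.1 + p.2 ≤ nn m ∧ -(nn m) ≤ p.1 - p.2 ∧ p.1 - p.2 ≤ nn m)

noncomputable def S (m : ℕ) : Finset (ℤ × ℤ) := (T m).filter P

def dirs : Finset (ℤ × ℤ) := {(0,1),(1,0),(1,1),(1,-1),(2,1),(2,-1),(1,2),(-1,2)}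

def bnd (m : ℕ) (d : ℤ × ℤ) : ℤ :=
  if d = (0,1) ∨ d = (1,0) then 6*m+4 else if d = (1,1) ∨ d = (1,-1) then 3*m+2 else 2*m+1

lemma bnd_nonneg (m : ℕ) (d : ℤ × ℤ) : 0 ≤ bnd m d := by
  unfold bnd; split_ifs <;> omega

noncomputable def Bad (m : ℕ) : Finset (ℤ × ℤ) :=
  insert (0,0) (dirs.biUnion fun d =>
    ((Finset.Icc (-(bnd m d)) (bnd m d)).erase 0).image fun x => (x*d.1, x*d.2))

lemma mem_dirs_cases {d : ℤ × ℤ} (hd : d ∈ dirs) :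
    d = (0,1) ∨ d = (1,0) ∨ d = (1,1) ∨ d = (1,-1) ∨ d = (2,1) ∨ d = (2,-1) ∨
    d = (1,2) ∨ d = (-1,2) := by
  simpa [dirs] using hd

lemma gauss (k : ℕ) : ∑ i ∈ Finset.range k, (2*i+1) = k^2 := by
  induction k with
  | zero => simp
  | succ k ih => rw [Finset.sum_range_succ, ih]; ring

lemma sumMin (N : ℕ) :
    ∑ i ∈ Finset.range (2*N+1), (2 * min i (2*N - i) + 1) = 2*N^2+2*N+1 := by
  rw [show 2*N+1 = (N+1) + N by omega, Finset.sum_range_add]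
  have h1 : ∑ i ∈ Finset.range (N+1), (2 * min i (2*N - i) + 1)
      = ∑ i ∈ Finset.range (N+1), (2*i+1) := by
    refine Finset.sum_congr rfl fun i hi => ?_
    simp only [Finset.mem_range] at hi; omega
  have h2 : ∑ i ∈ Finset.range N, (2 * min (N+1+i) (2*N - (N+1+i)) + 1)
      = ∑ i ∈ Finset.range N, (2*(N-1-i)+1) := by
    refine Finset.sum_congr rfl fun i hi => ?_
    simp only [Finset.mem_range] at hi; omega
  rw [h1, h2, Finset.sum_range_reflect (fun i => 2*i+1) N, gauss, gauss]
  ring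

lemma Icc_eq (N : ℕ) : Finset.Icc (-(N:ℤ)) N
    = (Finset.range (2*N+1)).image (fun i : ℕ => (i:ℤ) - N) := by
  ext x
  simp only [Finset.mem_Icc, Finset.mem_image, Finset.mem_range]
  constructor
  · rintro ⟨h1,h2⟩
    exact ⟨(x + N).toNat, by omega, by omega⟩
  · rintro ⟨i, hi, rfl⟩
    omega

lemma T_eq (m : ℕ) : T m = (Finset.Icc (-(nn m)) (nn m)).biUnion
    (fun a => (Finset.Icc (max (-(nn m)-a) (a-(nn m))) (min ((nn m)-a) ((nn m)+a))).image
      (Prod.mk a)) := by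
  ext ⟨a,b⟩
  simp only [T, Finset.mem_filter, Finset.mem_product, Finset.mem_Icc, Finset.mem_biUnion,
    Finset.mem_image, Prod.mk.injEq]
  constructor
  · rintro ⟨⟨⟨h1,h2⟩,h3,h4⟩,h5,h6,h7,h8⟩
    exact ⟨a, by omega, b, by omega, rfl, rfl⟩
  · rintro ⟨a', ⟨ha1, ha2⟩, b', hb', rfl, rfl⟩
    simp only [le_min_iff, max_le_iff] at hb'
    omega

lemma card_T (m : ℕ) : (T m).card = 72*m^2+108*m+41 := by
  rw [T_eq, Finset.card_biUnion]
  · have hre : Finset.Icc (-(nn m)) (nn m)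
        = (Finset.range (2*(6*m+4)+1)).image (fun i : ℕ => (i:ℤ) - (6*m+4 : ℕ)) := by
      rw [show nn m = ((6*m+4 : ℕ) : ℤ) by unfold nn; push_cast; ring]
      exact Icc_eq (6*m+4)
    rw [hre, Finset.sum_image (by intro x _ y _ h; simp only at h; omega)]
    have heq : ∀ i ∈ Finset.range (2*(6*m+4)+1),
        ((Finset.Icc (max (-(nn m)-((i:ℤ) - (6*m+4 : ℕ))) (((i:ℤ) - (6*m+4:ℕ))-(nn m)))
          (min ((nn m)-((i:ℤ) - (6*m+4:ℕ))) ((nn m)+((i:ℤ) - (6*m+4:ℕ))))).image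
            (Prod.mk ((i:ℤ) - (6*m+4:ℕ)))).card
        = 2 * min i (2*(6*m+4) - i) + 1 := by
      intro i hi
      simp only [Finset.mem_range] at hi
      rw [Finset.card_image_of_injective _ (Prod.mk_right_injective _)]
      rw [Int.card_Icc]
      simp only [nn]
      push_cast
      omega
    rw [Finset.sum_congr rfl heq, sumMin]
    ring
  · intro x _ y _ hxy
    simp only [Finset.disjoint_left, Finset.mem_image]
    rintro p ⟨b, _, rfl⟩ ⟨b', _, h⟩
    exact hxy (congrArg Prod.fst h).symm

lemma card_Bad (m : ℕ) : (Bad m).card = 52*m+33 := by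
  rw [Bad, Finset.card_insert_of_notMem, Finset.card_biUnion]
  · have heq : ∀ d ∈ dirs,
        ((((Finset.Icc (-(bnd m d)) (bnd m d)).erase 0)).image fun x => (x*d.1, x*d.2)).card
        = (2*(bnd m d)).toNat := by
      intro d hd
      have hb := bnd_nonneg m d
      have hinj : Function.Injective (fun x : ℤ => (x*d.1, x*d.2)) := by
        have hne : d.1 ≠ 0 ∨ d.2 ≠ 0 := by
          rcases mem_dirs_cases hd with rfl|rfl|rfl|rfl|rfl|rfl|rfl|rfl <;> simp
        intro x y hxy
        simp only [Prod.mk.injEq] at hxy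
        rcases hne with h|h
        · exact mul_right_cancel₀ h hxy.1
        · exact mul_right_cancel₀ h hxy.2
      rw [Finset.card_image_of_injective _ hinj,
        Finset.card_erase_of_mem (by simp only [Finset.mem_Icc]; omega), Int.card_Icc]
      omega
    rw [Finset.sum_congr rfl heq]
    simp only [dirs]
    rw [Finset.sum_insert (by decide), Finset.sum_insert (by decide),
      Finset.sum_insert (by decide), Finset.sum_insert (by decide),
      Finset.sum_insert (by decide), Finset.sum_insert (by decide),
      Finset.sum_insert (by decide), Finset.sum_singleton]
    simp only [bnd, Prod.mk.injEq]
    norm_num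
    omega
  · intro d1 h1 d2 h2 hne
    simp only [Finset.disjoint_left, Finset.mem_image, Finset.mem_erase, Finset.mem_Icc]
    rintro p ⟨x, ⟨hx0, hx⟩, rfl⟩ ⟨y, ⟨hy0, hy⟩, hxy⟩
    apply hne
    rcases mem_dirs_cases h1 with rfl|rfl|rfl|rfl|rfl|rfl|rfl|rfl <;>
      rcases mem_dirs_cases h2 with rfl|rfl|rfl|rfl|rfl|rfl|rfl|rfl <;>
      first
      | rfl
      | (exfalso; simp only [Prod.mk.injEq] at hxy; norm_num at hxy; omega)
  · intro hmem
    simp only [Finset.mem_biUnion, Finset.mem_image, Finset.mem_erase, Finset.mem_Icc] at hmem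
    obtain ⟨d, hd, x, ⟨hx0, _⟩, hxy⟩ := hmem
    rcases mem_dirs_cases hd with rfl|rfl|rfl|rfl|rfl|rfl|rfl|rfl <;>
      simp only [Prod.mk.injEq] at hxy <;> norm_num at hxy <;> omega

lemma Bad_eq (m : ℕ) : Bad m = (T m).filter (fun p => ¬ P p) := by
  ext ⟨a,b⟩
  simp only [Bad, Finset.mem_insert, Finset.mem_biUnion, Finset.mem_image, Finset.mem_erase,
    Finset.mem_Icc, Finset.mem_filter, T, Finset.mem_product, Prod.mk.injEq]
  simp only [nn]
  constructor
  · rintro (⟨rfl, rfl⟩ | ⟨d, hd, x, ⟨hx0, hx1, hx2⟩, h1, h2⟩)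
    · refine ⟨⟨⟨⟨by omega, by omega⟩, by omega, by omega⟩, by omega, by omega, by omega, by omega⟩,
        fun hP => hP.1 rfl⟩
    · rcases mem_dirs_cases hd with rfl|rfl|rfl|rfl|rfl|rfl|rfl|rfl <;>
      · norm_num [bnd, Prod.ext_iff] at hx1 hx2
        norm_num at h1 h2
        refine ⟨⟨⟨⟨by omega, by omega⟩, by omega, by omega⟩, by omega, by omega, by omega, by omega⟩,
          fun hP => ?_⟩
        obtain ⟨q1,q2,q3,q4,q5,q6,q7,q8⟩ := hP
        omega
  · rintro ⟨⟨⟨⟨ha1,ha2⟩,hb1,hb2⟩,h1,h2,h3,h4⟩,hnp⟩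
    have hd : a = 0 ∨ b = 0 ∨ a = b ∨ a = -b ∨ a = 2*b ∨ a = -(2*b) ∨ b = 2*a ∨ b = -(2*a) := by
      unfold P at hnp; tauto
    rcases hd with h|h|h|h|h|h|h|h
    · by_cases hz : b = 0
      · exact Or.inl ⟨by omega, hz⟩
      · exact Or.inr ⟨(0,1), by decide, b, ⟨hz, by norm_num [bnd, Prod.ext_iff] <;> omega,
          by norm_num [bnd, Prod.ext_iff] <;> omega⟩, by norm_num <;> omega, by norm_num <;> omega⟩
    · by_cases hz : a = 0
      · exact Or.inl ⟨hz, by omega⟩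
      · exact Or.inr ⟨(1,0), by decide, a, ⟨hz, by norm_num [bnd, Prod.ext_iff] <;> omega,
          by norm_num [bnd, Prod.ext_iff] <;> omega⟩, by norm_num <;> omega, by norm_num <;> omega⟩
    · by_cases hz : a = 0
      · exact Or.inl ⟨hz, by omega⟩
      · exact Or.inr ⟨(1,1), by decide, a, ⟨hz, by norm_num [bnd, Prod.ext_iff] <;> omega,
          by norm_num [bnd, Prod.ext_iff] <;> omega⟩, by norm_num <;> omega, by norm_num <;> omega⟩
    · by_cases hz : a = 0
      · exact Or.inl ⟨hz, by omega⟩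
      · exact Or.inr ⟨(1,-1), by decide, a, ⟨hz, by norm_num [bnd, Prod.ext_iff] <;> omega,
          by norm_num [bnd, Prod.ext_iff] <;> omega⟩, by norm_num <;> omega, by norm_num <;> omega⟩
    · by_cases hz : b = 0
      · exact Or.inl ⟨by omega, hz⟩
      · exact Or.inr ⟨(2,1), by decide, b, ⟨hz, by norm_num [bnd, Prod.ext_iff] <;> omega,
          by norm_num [bnd, Prod.ext_iff] <;> omega⟩, by norm_num <;> omega, by norm_num <;> omega⟩
    · by_cases hz : b = 0
      · exact Or.inl ⟨by omega, hz⟩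
      · exact Or.inr ⟨(2,-1), by decide, -b, ⟨by omega, by norm_num [bnd, Prod.ext_iff] <;> omega,
          by norm_num [bnd, Prod.ext_iff] <;> omega⟩, by norm_num <;> omega, by norm_num <;> omega⟩
    · by_cases hz : a = 0
      · exact Or.inl ⟨hz, by omega⟩
      · exact Or.inr ⟨(1,2), by decide, a, ⟨hz, by norm_num [bnd, Prod.ext_iff] <;> omega,
          by norm_num [bnd, Prod.ext_iff] <;> omega⟩, by norm_num <;> omega, by norm_num <;> omega⟩
    · by_cases hz : a = 0
      · exact Or.inl ⟨hz, by omega⟩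
      · exact Or.inr ⟨(-1,2), by decide, -a, ⟨by omega, by norm_num [bnd, Prod.ext_iff] <;> omega,
          by norm_num [bnd, Prod.ext_iff] <;> omega⟩, by norm_num <;> omega, by norm_num <;> omega⟩

lemma card_S (m : ℕ) : (S m).card = 72*m^2+56*m+8 := by
  have h1 := Finset.card_filter_add_card_filter_not (s := T m) (p := P)
  have h2 : ((T m).filter (fun p => ¬ P p)).card = 52*m+33 := by
    rw [← Bad_eq]; exact card_Bad m
  have h3 := card_T m
  unfold S
  set q := m^2 with hq
  omega

def Mat (m : ℕ) (p : ℤ × ℤ) : Matrix (Fin 3) (Fin 3) ℕ :=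
  !![(6*(m:ℤ)+5 + p.1).toNat, (6*(m:ℤ)+5 - p.1 - p.2).toNat, (6*(m:ℤ)+5 + p.2).toNat;
     (6*(m:ℤ)+5 - p.1 + p.2).toNat, (6*(m:ℤ)+5).toNat, (6*(m:ℤ)+5 + p.1 - p.2).toNat;
     (6*(m:ℤ)+5 - p.2).toNat, (6*(m:ℤ)+5 + p.1 + p.2).toNat, (6*(m:ℤ)+5 - p.1).toNat]

set_option maxHeartbeats 3000000 in
lemma forward (m : ℕ) (p : ℤ × ℤ) (hp : p ∈ S m) : IsMagicSquare3 (18*m+15) (Mat m p) := by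
  obtain ⟨a, b⟩ := p
  simp only [S, T, P, Finset.mem_filter, Finset.mem_product, Finset.mem_Icc] at hp
  simp only [nn] at hp
  obtain ⟨⟨⟨⟨ha1, ha2⟩, hb1, hb2⟩, h1, h2, h3, h4⟩, q1, q2, q3, q4, q5, q6, q7, q8⟩ := hp
  refine ⟨?_, ?_, ?_, ?_, ?_, ?_⟩
  · intro i j; fin_cases i <;> fin_cases j <;> simp [Mat] <;> omega
  · intro x y hxy
    simp only at hxy
    fin_cases x <;> fin_cases y <;> simp [Mat, Prod.mk.injEq] at hxy ⊢ <;> omega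
  · intro i; fin_cases i <;> simp [Mat, Fin.sum_univ_three] <;> omega
  · intro j; fin_cases j <;> simp [Mat, Fin.sum_univ_three] <;> omega
  · simp [Mat]; omega
  · simp [Mat]; omega

set_option maxHeartbeats 3000000 in
lemma backward (m : ℕ) (M : Matrix (Fin 3) (Fin 3) ℕ)
    (hM : IsMagicSquare3 (18*m+15) M) : ∃ p ∈ S m, Mat m p = M := by
  obtain ⟨hpos, hinj, hrow, hcol, hd1, hd2⟩ := hM
  have hr0 := hrow 0; have hr1 := hrow 1; have hr2 := hrow 2
  have hc0 := hcol 0; have hc1 := hcol 1; have hc2 := hcol 2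
  simp only [Fin.sum_univ_three] at hr0 hr1 hr2 hc0 hc1 hc2
  have p00 := hpos 0 0; have p01 := hpos 0 1; have p02 := hpos 0 2
  have p10 := hpos 1 0; have p11 := hpos 1 1; have p12 := hpos 1 2
  have p20 := hpos 2 0; have p21 := hpos 2 1; have p22 := hpos 2 2
  have ne1 : M 0 0 ≠ M 1 1 := fun e => absurd (hinj (a₁ := (0,0)) (a₂ := (1,1)) e) (by decide)
  have ne2 : M 0 2 ≠ M 1 1 := fun e => absurd (hinj (a₁ := (0,2)) (a₂ := (1,1)) e) (by decide)
  have ne3 : M 0 0 ≠ M 0 2 := fun e => absurd (hinj (a₁ := (0,0)) (a₂ := (0,2)) e) (by decide)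
  have ne4 : M 0 0 ≠ M 2 0 := fun e => absurd (hinj (a₁ := (0,0)) (a₂ := (2,0)) e) (by decide)
  have ne5 : M 1 2 ≠ M 0 2 := fun e => absurd (hinj (a₁ := (1,2)) (a₂ := (0,2)) e) (by decide)
  have ne6 : M 2 1 ≠ M 2 0 := fun e => absurd (hinj (a₁ := (2,1)) (a₂ := (2,0)) e) (by decide)
  have ne7 : M 1 0 ≠ M 0 0 := fun e => absurd (hinj (a₁ := (1,0)) (a₂ := (0,0)) e) (by decide)
  have ne8 : M 2 1 ≠ M 2 2 := fun e => absurd (hinj (a₁ := (2,1)) (a₂ := (2,2)) e) (by decide)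
  refine ⟨((M 0 0 : ℤ) - (6*m+5), (M 0 2 : ℤ) - (6*m+5)), ?_, ?_⟩
  · simp only [S, T, P, Finset.mem_filter, Finset.mem_product, Finset.mem_Icc]
    simp only [nn]
    refine ⟨⟨⟨⟨by omega, by omega⟩, by omega, by omega⟩, by omega, by omega, by omega, by omega⟩,
      by omega, by omega, by omega, by omega, by omega, by omega, by omega, by omega⟩
  · ext i j
    fin_cases i <;> fin_cases j <;> simp [Mat] <;> omega

lemma injOn (m : ℕ) : Set.InjOn (Mat m) ↑(S m) := by
  rintro ⟨a,b⟩ hp ⟨a',b'⟩ hq h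
  simp only [Finset.coe_filter, S, T, Set.mem_setOf_eq, Finset.mem_filter, Finset.mem_product,
    Finset.mem_Icc] at hp hq
  simp only [nn] at hp hq
  have h00 := congrFun (congrFun h 0) 0
  have h02 := congrFun (congrFun h 0) 2
  simp [Mat] at h00 h02
  have ha : a = a' := by omega
  have hb : b = b' := by omega
  simp [ha, hb]

lemma a3_eq (m : ℕ) : a3 (18*m+15) = 72*m^2+56*m+8 := by
  have hset : {M : Matrix (Fin 3) (Fin 3) ℕ | IsMagicSquare3 (18*m+15) M} = Mat m '' ↑(S m) := by
    ext M
    constructor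
    · intro hM
      obtain ⟨p, hp, hpe⟩ := backward m M hM
      exact ⟨p, hp, hpe⟩
    · rintro ⟨p, hp, rfl⟩
      exact forward m p hp
  rw [a3, hset, Set.ncard_image_of_injOn (injOn m), Set.ncard_coe_finset, card_S]

end MA

theorem a3_formula_mod18_15 (t : ℕ) (ht : 0 < t) (h : t % 18 = 15) :
    (a3 t : ℚ) = (2 * (t : ℚ) ^ 2 - 32 * (t : ℚ) + 102) / 9 := by
  obtain ⟨m, rfl⟩ : ∃ m, t = 18*m+15 := ⟨t/18, by omega⟩
  rw [MA.a3_eq]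
  push_cast
  field_simp
  ring
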